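/- Let E be a finite-dimensional real normed vector space and let X be a finite subset of E. Then there exists a compact subset Y of E such that for every positive integer n, the convex hull of the dilated set n•X = {n·x : x ∈ X} is contained in the Minkowski sum Y + (X + X + ⋯ + X) (with n summands X), i.e., every point of conv(n•X) can be written as y + x₁ + ⋯ + xₙ with y ∈ Y and x₁, …, xₙ ∈ X. -/

import Mathlib

open Pointwise

lemma multiset_sum_sum {α E : Type*} [AddCommMonoid E] (s : Finset α) (f : α → Multiset E) :
    (∑ y ∈ s, f y).sum = ∑ y ∈ s, (f y).sum := by
  induction s using Finset.cons_induction with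
  | empty => simp
  | cons a s h ih => simp [Finset.sum_cons, ih]

/-- **Lemma (convex)**: If `X` is a finite subset of a finite-dimensional real normed vector
space `E`, then there is a compact subset `Y ⊆ E` such that for every positive integer `n`,
the convex hull of the dilate `n • X = {n • x | x ∈ X}` is contained in the Minkowski sum
`Y + (X + ⋯ + X)` (`n` summands), i.e. every point of `conv (n • X)` is of the form
`y + x₁ + ⋯ + xₙ` with `y ∈ Y` and all `xᵢ ∈ X`. -/
theorem stmt_0 {E : Type*} [NormedAddCommGroup E] [NormedSpace ℝ E] [FiniteDimensional ℝ E]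
    (X : Set E) (hX : X.Finite) :
    ∃ Y : Set E, IsCompact Y ∧
      ∀ n : ℕ, 0 < n → ∀ v ∈ convexHull ℝ ((n : ℝ) • X),
        ∃ y ∈ Y, ∃ x : Fin n → E, (∀ i, x i ∈ X) ∧ v = y + ∑ i, x i := by
  rcases X.eq_empty_or_nonempty with rfl | ⟨x₀, hx₀⟩
  · refine ⟨∅, isCompact_empty, ?_⟩
    intro n hn v hv
    simp [Set.smul_set_empty] at hv
  classical
  set s : Finset E := hX.toFinset with hs
  have hsX : (s : Set E) = X := hX.coe_toFinset
  obtain ⟨M, hM⟩ : ∃ M : ℝ, ∀ x ∈ X, ‖x‖ ≤ M := by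
    obtain ⟨M, hM⟩ := (hX.image norm).bddAbove
    exact ⟨M, fun x hx => hM ⟨x, hx, rfl⟩⟩
  have hM0 : 0 ≤ M := le_trans (norm_nonneg x₀) (hM x₀ hx₀)
  set R : ℝ := s.card * M + s.card * M with hR
  refine ⟨Metric.closedBall 0 R, isCompact_closedBall 0 R, ?_⟩
  intro n hn v hv
  rw [convexHull_smul] at hv
  obtain ⟨c, hc, rfl⟩ := hv
  rw [← hsX, Finset.convexHull_eq] at hc
  obtain ⟨w, hw0, hw1, hcc⟩ := hc
  rw [Finset.centerMass_eq_of_sum_1 _ _ hw1] at hcc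
  -- integer parts
  set m : E → ℕ := fun y => ⌊(n : ℝ) * w y⌋₊ with hm
  set k : ℕ := ∑ y ∈ s, m y with hk
  have hwn : ∀ y ∈ s, 0 ≤ (n : ℝ) * w y := fun y hy =>
    mul_nonneg (Nat.cast_nonneg n) (hw0 y hy)
  have hfloor_le : ∀ y ∈ s, (m y : ℝ) ≤ (n : ℝ) * w y := fun y hy =>
    Nat.floor_le (hwn y hy)
  have hfrac_lt : ∀ y ∈ s, (n : ℝ) * w y - (m y : ℝ) < 1 := by
    intro y hy
    have := Nat.lt_floor_add_one ((n : ℝ) * w y)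
    linarith
  have hkn : k ≤ n := by
    have : (k : ℝ) ≤ (n : ℝ) := by
      rw [hk]
      push_cast
      calc ∑ y ∈ s, (m y : ℝ) ≤ ∑ y ∈ s, (n : ℝ) * w y :=
            Finset.sum_le_sum hfloor_le
        _ = (n : ℝ) * ∑ y ∈ s, w y := by rw [Finset.mul_sum]
        _ = n := by rw [hw1, mul_one]
    exact_mod_cast this
  -- the multiset of chosen points
  set t : Multiset E := (∑ y ∈ s, Multiset.replicate (m y) y) +
      Multiset.replicate (n - k) x₀ with ht
  have htcard : Multiset.card t = n := by
    rw [ht]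
    simp only [Multiset.card_add, Multiset.card_replicate]
    have : Multiset.card (∑ y ∈ s, Multiset.replicate (m y) y) = ∑ y ∈ s, m y := by
      induction s using Finset.cons_induction with
      | empty => simp
      | cons a u h ih => simp [Finset.sum_cons, ih]
    omega
  have htmem : ∀ z ∈ t, z ∈ X := by
    intro z hz
    rw [ht, Multiset.mem_add] at hz
    rcases hz with hz | hz
    · rw [Multiset.mem_sum] at hz
      obtain ⟨y, hy, hzy⟩ := hz
      rw [Multiset.eq_of_mem_replicate hzy]
      rw [← hsX]; exact_mod_cast hy
    · rw [Multiset.eq_of_mem_replicate hz]; exact hx₀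
  have htsum : t.sum = (∑ y ∈ s, (m y) • y) + (n - k) • x₀ := by
    rw [ht, Multiset.sum_add, multiset_sum_sum]
    simp [Multiset.sum_replicate]
  -- enumerate t by Fin n
  set l : List E := t.toList with hl
  have hlen : l.length = n := by rw [hl, Multiset.length_toList, htcard]
  set x : Fin n → E := fun i => l.get (Fin.cast hlen.symm i) with hx
  have hxmem : ∀ i, x i ∈ X := fun i => htmem _ (Multiset.mem_toList.mp (l.get_mem _))
  have hxsum : ∑ i, x i = t.sum := by
    rw [← Multiset.coe_toList t, ← hl, Multiset.sum_coe]
    rw [hx]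
    rw [show l.sum = ∑ i : Fin l.length, l.get i by rw [← Fin.sum_ofFn, List.ofFn_get]]
    exact Fintype.sum_equiv (Fin.castOrderIso hlen.symm).toEquiv _ _ (fun i => rfl)
  refine ⟨(n : ℝ) • c - ∑ i, x i, ?_, x, hxmem, by abel⟩
  rw [Metric.mem_closedBall, dist_zero_right]
  have hnk : ((n - k : ℕ) : ℝ) ≤ (s.card : ℝ) := by
    have h1 : ((n - k : ℕ) : ℝ) = (n : ℝ) - (k : ℝ) := by
      push_cast [Nat.cast_sub hkn]; ring
    rw [h1]
    have h2 : (n : ℝ) - (k : ℝ) = ∑ y ∈ s, ((n : ℝ) * w y - (m y : ℝ)) := by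
      rw [Finset.sum_sub_distrib, ← Finset.mul_sum, hw1, mul_one, hk]
      push_cast
      ring
    rw [h2]
    calc ∑ y ∈ s, ((n : ℝ) * w y - (m y : ℝ)) ≤ ∑ y ∈ s, (1 : ℝ) :=
          Finset.sum_le_sum (fun y hy => le_of_lt (hfrac_lt y hy))
      _ = s.card := by simp
  have hvsum : (n : ℝ) • c = ∑ y ∈ s, ((n : ℝ) * w y) • y := by
    rw [← hcc, Finset.smul_sum]
    simp [smul_smul]
  have key : (n : ℝ) • c - ∑ i, x i =
      (∑ y ∈ s, ((n : ℝ) * w y - (m y : ℝ)) • y) - ((n - k : ℕ) : ℝ) • x₀ := by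
    rw [hxsum, htsum, hvsum]
    simp only [sub_smul]
    rw [Finset.sum_sub_distrib]
    have : ∀ y ∈ s, (m y : ℝ) • y = (m y) • y := fun y _ =>
      (Nat.cast_smul_eq_nsmul ℝ _ _)
    rw [Finset.sum_congr rfl this, Nat.cast_smul_eq_nsmul]
    abel
  rw [key, hR]
  calc ‖(∑ y ∈ s, ((n : ℝ) * w y - (m y : ℝ)) • y) - ((n - k : ℕ) : ℝ) • x₀‖
      ≤ ‖∑ y ∈ s, ((n : ℝ) * w y - (m y : ℝ)) • y‖ + ‖((n - k : ℕ) : ℝ) • x₀‖ :=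
        norm_sub_le _ _
    _ ≤ (∑ y ∈ s, ‖((n : ℝ) * w y - (m y : ℝ)) • y‖) + ‖((n - k : ℕ) : ℝ) • x₀‖ := by
        gcongr
        exact norm_sum_le _ _
    _ ≤ (∑ y ∈ s, M) + (s.card : ℝ) * M := by
        gcongr with y hy
        · rw [norm_smul]
          have h1 : |(n : ℝ) * w y - (m y : ℝ)| ≤ 1 := by
            rw [abs_le]
            constructor
            · linarith [hfloor_le y hy]
            · linarith [hfrac_lt y hy]
          have h2 : ‖y‖ ≤ M := hM y (by rw [← hsX]; exact_mod_cast hy)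
          calc ‖((n : ℝ) * w y - (m y : ℝ))‖ * ‖y‖ ≤ 1 * M := by
                apply mul_le_mul _ h2 (norm_nonneg _) zero_le_one
                rwa [Real.norm_eq_abs]
            _ = M := one_mul M
        · rw [norm_smul, Real.norm_eq_abs, abs_of_nonneg (by positivity)]
          exact mul_le_mul hnk (hM x₀ hx₀) (norm_nonneg _) (Nat.cast_nonneg _)
    _ = s.card * M + s.card * M := by rw [Finset.sum_const, nsmul_eq_mul]
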